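/- Let X > 0 be real and set ζ = X/(1+X). For ε ∈ (0,2) define Φ(ε) = ∑_{m≥0} (ε/2)_m (1−ε/2)_m / ((3/2)_m m!) · ζ^m (a convergent series). Then lim_{ε→0⁺} [ Γ(1+ε) (16π)^{ε−1} / (2πε) · (1+X)^{−ε/2} · Φ(ε) − 1/(32π²ε) ] = (1/(32π²)) · ( 1 − γ − log( √(1+X) / (16π) ) − arctan(√X)/√X ), where γ is the Euler–Mascheroni constant. -/

import Mathlib

/-- Pochhammer symbol (rising factorial) for a real argument. -/
noncomputable def poch (x : ℝ) (n : ℕ) : ℝ := (ascPochhammer ℝ n).eval x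

/-- `Φ(ε) = ₂F₁(ε/2, 1−ε/2; 3/2; ζ)` with `ζ = X/(1+X)`. -/
noncomputable def Phi (X ε : ℝ) : ℝ :=
  ∑' m : ℕ, poch (ε / 2) m * poch (1 - ε / 2) m /
    (poch (3 / 2) m * (Nat.factorial m : ℝ)) * (X / (1 + X)) ^ m

open Real Filter Topology Polynomial intervalIntegral MeasureTheory


lemma poch_zero (x : ℝ) : poch x 0 = 1 := by simp [poch]

lemma poch_succ (x : ℝ) (n : ℕ) : poch x (n + 1) = poch x n * (x + n) := by
  simp [poch, ascPochhammer_succ_right, Polynomial.eval_mul]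

lemma poch_succ_left (x : ℝ) (n : ℕ) : poch x (n + 1) = x * poch (x + 1) n := by
  simp [poch, ascPochhammer_succ_left, Polynomial.eval_mul, Polynomial.eval_comp]

lemma poch_pos {x : ℝ} (hx : 0 < x) (n : ℕ) : 0 < poch x n := by
  induction n with
  | zero => simp [poch_zero]
  | succ n ih => rw [poch_succ]; positivity

lemma poch_one (n : ℕ) : poch 1 n = n.factorial := by
  induction n with
  | zero => simp [poch_zero]
  | succ n ih => rw [poch_succ, ih, Nat.factorial_succ]; push_cast; ring

lemma poch_le_factorial {x : ℝ} (hx0 : 0 < x) (hx1 : x ≤ 1) (n : ℕ) :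
    poch x n ≤ n.factorial := by
  induction n with
  | zero => simp [poch_zero]
  | succ n ih =>
    rw [poch_succ, Nat.factorial_succ]
    push_cast
    have h1 : 0 < poch x n := poch_pos hx0 n
    have h2 : x + n ≤ (n:ℝ) + 1 := by linarith
    have h3 : (0:ℝ) < x + n := by positivity
    nlinarith

lemma factorial_le_poch {x : ℝ} (hx : 1 ≤ x) (n : ℕ) : (n.factorial : ℝ) ≤ poch x n := by
  induction n with
  | zero => simp [poch_zero]
  | succ n ih =>
    rw [poch_succ, Nat.factorial_succ]
    push_cast
    have h2 : (n:ℝ) + 1 ≤ x + n := by linarith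
    have h3 : (0:ℝ) < (n.factorial:ℝ) := by positivity
    nlinarith

lemma poch_le_succ_factorial {x : ℝ} (hx0 : 0 < x) (hx : x ≤ 2) (n : ℕ) :
    poch x n ≤ (n + 1).factorial := by
  induction n with
  | zero => simp [poch_zero, Nat.factorial]
  | succ n ih =>
    rw [poch_succ, Nat.factorial_succ]
    push_cast
    have h1 : 0 < poch x n := poch_pos hx0 n
    have h2 : x + n ≤ (n:ℝ) + 2 := by linarith
    have h3 : (0:ℝ) < x + n := by positivity
    nlinarith

lemma continuous_poch (n : ℕ) : Continuous fun x : ℝ => poch x n :=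
  (ascPochhammer ℝ n).continuous_aeval

section Main
variable {X : ℝ}

lemma zeta_nonneg (hX : 0 < X) : 0 ≤ X / (1 + X) := by positivity
lemma zeta_lt_one (hX : 0 < X) : X / (1 + X) < 1 := by
  rw [div_lt_one (by linarith)]; linarith

lemma term_bound (hX : 0 < X) {ε : ℝ} (hε : 0 < ε) (hε2 : ε < 2) (m : ℕ) :
    |poch (ε / 2) m * poch (1 - ε / 2) m /
      (poch (3 / 2) m * (Nat.factorial m : ℝ)) * (X / (1 + X)) ^ m| ≤ (X / (1 + X)) ^ m := by
  have hz0 : (0:ℝ) ≤ X / (1+X) := zeta_nonneg hX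
  have h1 : 0 < poch (ε/2) m := poch_pos (by linarith) m
  have h2 : 0 < poch (1 - ε/2) m := poch_pos (by linarith) m
  have h3 : 0 < poch (3/2 : ℝ) m := poch_pos (by norm_num) m
  have hf : (0:ℝ) < m.factorial := by positivity
  have hb1 : poch (ε/2) m ≤ m.factorial := poch_le_factorial (by linarith) (by linarith) m
  have hb2 : poch (1 - ε/2) m ≤ m.factorial := poch_le_factorial (by linarith) (by linarith) m
  have hb3 : (m.factorial : ℝ) ≤ poch (3/2 : ℝ) m := factorial_le_poch (by norm_num) m
  rw [abs_mul, abs_pow, abs_of_nonneg hz0]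
  have : |poch (ε / 2) m * poch (1 - ε / 2) m / (poch (3 / 2) m * (Nat.factorial m : ℝ))| ≤ 1 := by
    rw [abs_div, abs_of_nonneg (by positivity), abs_of_nonneg (by positivity),
      div_le_one (by positivity)]
    nlinarith
  nlinarith [pow_nonneg hz0 m]

lemma summable_phi (hX : 0 < X) {ε : ℝ} (hε : 0 < ε) (hε2 : ε < 2) :
    Summable (fun m : ℕ =>
      poch (ε / 2) m * poch (1 - ε / 2) m /
        (poch (3 / 2) m * (Nat.factorial m : ℝ)) * (X / (1 + X)) ^ m) := by
  apply Summable.of_abs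
  apply Summable.of_nonneg_of_le (fun m => abs_nonneg _) (term_bound hX hε hε2)
  exact summable_geometric_of_lt_one (zeta_nonneg hX) (zeta_lt_one hX)

end Main

noncomputable def qterm (X ε : ℝ) (k : ℕ) : ℝ :=
  poch (1 + ε / 2) k * poch (1 - ε / 2) (k + 1) /
    (2 * (poch (3 / 2) (k + 1) * ((k + 1).factorial : ℝ))) * (X / (1 + X)) ^ (k + 1)

section Main
variable {X : ℝ}

lemma phi_term_succ (X ε : ℝ) (k : ℕ) :
    poch (ε / 2) (k + 1) * poch (1 - ε / 2) (k + 1) /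
      (poch (3 / 2) (k + 1) * ((k + 1).factorial : ℝ)) * (X / (1 + X)) ^ (k + 1)
      = ε * qterm X ε k := by
  rw [qterm, poch_succ_left]
  have h3 : (0:ℝ) < poch (3/2 : ℝ) (k+1) := poch_pos (by norm_num) (k+1)
  have hf : (0:ℝ) < ((k+1).factorial : ℝ) := by positivity
  have : ε / 2 + 1 = 1 + ε / 2 := by ring
  rw [this]
  field_simp

lemma Phi_eq (hX : 0 < X) {ε : ℝ} (hε : 0 < ε) (hε2 : ε < 2) :
    Phi X ε = 1 + ε * ∑' k, qterm X ε k := by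
  rw [Phi, Summable.tsum_eq_zero_add (summable_phi hX hε hε2)]
  congr 1
  · simp [poch_zero]
  · rw [← tsum_mul_left]
    exact tsum_congr fun k => phi_term_succ X ε k

lemma qterm_bound (hX : 0 < X) {ε : ℝ} (hε : 0 < ε) (hε2 : ε < 2) (k : ℕ) :
    ‖qterm X ε k‖ ≤ (X / (1 + X)) ^ (k + 1) / 2 := by
  have hz0 : (0:ℝ) ≤ X / (1+X) := zeta_nonneg hX
  have h1 : 0 < poch (1 + ε/2) k := poch_pos (by linarith) k
  have h2 : 0 < poch (1 - ε/2) (k+1) := poch_pos (by linarith) (k+1)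
  have h3 : 0 < poch (3/2 : ℝ) (k+1) := poch_pos (by norm_num) (k+1)
  have hf : (0:ℝ) < (k+1).factorial := by positivity
  have hb1 : poch (1 + ε/2) k ≤ (k+1).factorial := poch_le_succ_factorial (by linarith) (by linarith) k
  have hb2 : poch (1 - ε/2) (k+1) ≤ (k+1).factorial := poch_le_factorial (by linarith) (by linarith) (k+1)
  have hb3 : ((k+1).factorial : ℝ) ≤ poch (3/2 : ℝ) (k+1) := factorial_le_poch (by norm_num) (k+1)
  rw [Real.norm_eq_abs, qterm, abs_mul, abs_pow, abs_of_nonneg hz0]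
  have hc : |poch (1 + ε / 2) k * poch (1 - ε / 2) (k + 1) /
      (2 * (poch (3 / 2) (k + 1) * ((k + 1).factorial : ℝ)))| ≤ 1 / 2 := by
    rw [abs_div, abs_of_nonneg (by positivity), abs_of_nonneg (by positivity),
      div_le_div_iff₀ (by positivity) (by norm_num)]
    nlinarith
  calc _ ≤ (1/2) * (X / (1 + X)) ^ (k+1) := by
        exact mul_le_mul_of_nonneg_right hc (pow_nonneg hz0 _)
    _ = _ := by ring

lemma qterm_tendsto (X : ℝ) (k : ℕ) :
    Filter.Tendsto (fun ε => qterm X ε k) (nhdsWithin 0 (Set.Ioi 0)) (nhds (qterm X 0 k)) := by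
  apply Filter.Tendsto.mono_left _ nhdsWithin_le_nhds
  have : Continuous fun ε : ℝ => qterm X ε k := by
    apply Continuous.mul _ continuous_const
    apply Continuous.div
    · exact ((continuous_poch k).comp (by continuity)).mul
        ((continuous_poch (k+1)).comp (by continuity))
    · exact continuous_const
    · intro x
      have h3 : 0 < poch (3/2 : ℝ) (k+1) := poch_pos (by norm_num) (k+1)
      have hf : (0:ℝ) < (k+1).factorial := by positivity
      positivity
  exact this.tendsto 0

lemma Qfun_tendsto (hX : 0 < X) :
    Filter.Tendsto (fun ε => ∑' k, qterm X ε k) (nhdsWithin 0 (Set.Ioi 0))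
      (nhds (∑' k, qterm X 0 k)) := by
  apply tendsto_tsum_of_dominated_convergence
    (bound := fun k : ℕ => (X / (1 + X)) ^ (k + 1) / 2)
  · apply Summable.div_const
    exact ((summable_geometric_of_lt_one (zeta_nonneg hX) (zeta_lt_one hX)).mul_left _).congr
      (fun k => by rw [← pow_succ']) |>.congr (fun k => rfl)
  · exact fun k => qterm_tendsto X k
  · filter_upwards [Ioo_mem_nhdsGT_of_mem (Set.mem_Ico.mpr ⟨le_refl (0:ℝ), two_pos⟩)]
      with ε hε k
    exact qterm_bound hX hε.1 hε.2 k

end Main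

lemma hasDerivAt_gfun (X : ℝ) (hX : 0 < X) :
    HasDerivAt (fun ε : ℝ => Real.Gamma (1 + ε) * (16 * π) ^ ε * (1 + X) ^ (-ε / 2))
      (-Real.eulerMascheroniConstant + Real.log (16 * π) - Real.log (1 + X) / 2) 0 := by
  have hπ : (0:ℝ) < 16 * π := by positivity
  have h1X : (0:ℝ) < 1 + X := by linarith
  have hA : HasDerivAt (fun ε : ℝ => Real.Gamma (1 + ε)) (-Real.eulerMascheroniConstant) 0 := by
    have h0 : HasDerivAt (fun ε : ℝ => 1 + ε) 1 0 := (hasDerivAt_id (0:ℝ)).const_add 1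
    have h1 : HasDerivAt Real.Gamma (-Real.eulerMascheroniConstant) (1 + (0:ℝ)) := by
      simpa using Real.hasDerivAt_Gamma_one
    exact (h1.comp 0 h0).congr_deriv (mul_one _)
  have hB : HasDerivAt (fun ε : ℝ => (16 * π) ^ ε) (Real.log (16 * π)) 0 := by
    have := (Real.hasStrictDerivAt_const_rpow hπ 0).hasDerivAt
    simpa using this
  have hC : HasDerivAt (fun ε : ℝ => (1 + X) ^ (-ε / 2)) (-(Real.log (1 + X)) / 2) 0 := by
    have hin : HasDerivAt (fun ε : ℝ => -ε / 2) (-(1:ℝ)/2) 0 := by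
      simpa using ((hasDerivAt_id (0:ℝ)).neg.div_const 2)
    have := ((Real.hasStrictDerivAt_const_rpow h1X ((-(0:ℝ))/2)).hasDerivAt).comp 0 hin
    simp only [Function.comp_def] at this
    refine this.congr_deriv (Eq.symm ?_)
    rw [neg_zero, zero_div, Real.rpow_zero]
    ring
  have := (hA.mul hB).mul hC
  refine this.congr_deriv (Eq.symm ?_)
  simp [Real.Gamma_one]
  ring

lemma hasDerivAt_w {t : ℝ} (ht : t ≤ 1) :
    HasDerivAt (fun s : ℝ => (1 - s) * Real.sqrt (1 - s)) (-(3/2) * Real.sqrt (1 - t)) t := by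
  rcases lt_or_eq_of_le ht with ht' | rfl
  · have h0 : (0:ℝ) < 1 - t := by linarith
    have hs : HasDerivAt (fun s : ℝ => 1 - s) (-1) t := by
      simpa using ((hasDerivAt_id t).const_sub 1)
    have hsq : HasDerivAt (fun s : ℝ => Real.sqrt (1 - s)) (1 / (2 * Real.sqrt (1 - t)) * (-1)) t :=
      (Real.hasDerivAt_sqrt (ne_of_gt h0)).comp t hs
    have := hs.mul hsq
    refine this.congr_deriv (Eq.symm ?_)
    have hsp : 0 < Real.sqrt (1 - t) := Real.sqrt_pos.mpr h0
    field_simp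
    nlinarith [Real.sq_sqrt h0.le, Real.sqrt_nonneg (1 - t)]
  · rw [hasDerivAt_iff_tendsto_slope]
    have hev : (fun s => -Real.sqrt (1 - s)) =ᶠ[𝓝[≠] (1:ℝ)] slope (fun s : ℝ => (1 - s) * Real.sqrt (1 - s)) 1 := by
      filter_upwards [self_mem_nhdsWithin] with s hs
      have hs1 : s - 1 ≠ 0 := sub_ne_zero.mpr hs
      rw [slope_def_field]
      field_simp
      ring
    rw [show -(3/2 : ℝ) * Real.sqrt (1 - 1) = 0 by simp]
    apply Filter.Tendsto.congr' hev
    have : Filter.Tendsto (fun s : ℝ => -Real.sqrt (1 - s)) (𝓝 1) (𝓝 (-Real.sqrt (1-1))) := by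
      exact (((Real.continuous_sqrt.comp (by continuity)).neg).tendsto 1)
    simpa using this.mono_left nhdsWithin_le_nhds


noncomputable def J (k : ℕ) : ℝ := ∫ t in (0:ℝ)..1, t ^ k * Real.sqrt (1 - t)

lemma J_cont (k : ℕ) : Continuous fun t : ℝ => t ^ k * Real.sqrt (1 - t) := by
  exact (continuous_pow k).mul (Real.continuous_sqrt.comp (by continuity))

lemma J_zero : J 0 = 2 / 3 := by
  have : J 0 = ∫ t in (0:ℝ)..1, Real.sqrt (1 - t) := by
    unfold J; congr 1; funext t; simp
  rw [this]
  rw [intervalIntegral.integral_comp_sub_left (fun u => Real.sqrt u) 1]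
  norm_num
  rw [intervalIntegral.integral_congr (g := fun u : ℝ => u ^ ((1:ℝ)/2))]
  · rw [integral_rpow (Or.inl (by norm_num))]
    norm_num
  · intro u hu
    rw [Set.uIcc_of_le (by norm_num)] at hu
    simp [Real.sqrt_eq_rpow]

lemma J_succ (k : ℕ) : J (k + 1) = (2 * k + 2) / (2 * k + 5) * J k := by
  have hu : ∀ x ∈ Set.uIcc (0:ℝ) 1, HasDerivAt (fun t : ℝ => t ^ (k+1))
      (((k:ℝ)+1) * x ^ k) x := by
    intro x hx
    simpa using (hasDerivAt_pow (k+1) x)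
  have hv : ∀ x ∈ Set.uIcc (0:ℝ) 1, HasDerivAt (fun s : ℝ => -(2/3) * ((1 - s) * Real.sqrt (1 - s)))
      (Real.sqrt (1 - x)) x := by
    intro x hx
    rw [Set.uIcc_of_le (by norm_num)] at hx
    have := (hasDerivAt_w (t := x) hx.2).const_mul (-(2/3) : ℝ)
    refine this.congr_deriv (Eq.symm ?_)
    ring
  have hu' : IntervalIntegrable (fun x : ℝ => ((k:ℝ)+1) * x ^ k) MeasureTheory.volume 0 1 :=
    (Continuous.intervalIntegrable (by continuity) _ _)
  have hv' : IntervalIntegrable (fun x : ℝ => Real.sqrt (1 - x)) MeasureTheory.volume 0 1 :=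
    (Continuous.intervalIntegrable (Real.continuous_sqrt.comp (by continuity)) _ _)
  have ibp := intervalIntegral.integral_mul_deriv_eq_deriv_mul hu hv hu' hv'
  have lhs_eq : (∫ x in (0:ℝ)..1, x ^ (k+1) * Real.sqrt (1 - x)) = J (k+1) := rfl
  rw [lhs_eq] at ibp
  simp only [one_pow, sub_self, Real.sqrt_zero, mul_zero, zero_mul, ne_eq,
    zero_pow (Nat.succ_ne_zero k)] at ibp
  -- ibp : J (k+1) = ... - ∫ x in 0..1, ((k+1) x^k) * (-(2/3) * ((1-x) * sqrt (1-x)))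
  have hsplit : (∫ x in (0:ℝ)..1, ((k:ℝ)+1) * x ^ k * (-(2/3) * ((1 - x) * Real.sqrt (1 - x))))
      = -(2/3) * ((k:ℝ)+1) * (J k - J (k+1)) := by
    have h1 : ∀ x : ℝ, ((k:ℝ)+1) * x ^ k * (-(2/3) * ((1 - x) * Real.sqrt (1 - x)))
        = (-(2/3) * ((k:ℝ)+1)) * (x ^ k * Real.sqrt (1 - x) - x ^ (k+1) * Real.sqrt (1 - x)) := by
      intro x; ring
    rw [intervalIntegral.integral_congr (fun x _ => h1 x)]
    rw [intervalIntegral.integral_const_mul, intervalIntegral.integral_sub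
      ((J_cont k).intervalIntegrable _ _) ((J_cont (k+1)).intervalIntegrable _ _)]
    rfl
  rw [hsplit] at ibp
  have h2 : J (k+1) = (2/3) * ((k:ℝ)+1) * (J k - J (k+1)) := by linarith [ibp]
  have hk5 : (2 * (k:ℝ) + 5) ≠ 0 := by positivity
  field_simp
  linear_combination 3 * h2

lemma J_eq (k : ℕ) : J k = (k.factorial : ℝ) / poch (3/2) (k + 1) := by
  induction k with
  | zero =>
    rw [J_zero]
    norm_num [poch_succ, poch]
  | succ k ih =>
    rw [J_succ, ih, poch_succ (3/2 : ℝ) (k+1), Nat.factorial_succ]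
    have h1 : (0:ℝ) < poch (3/2) (k+1) := poch_pos (by norm_num) _
    have h2 : (3/2 : ℝ) + ((k:ℝ)+1) ≠ 0 := by positivity
    push_cast
    field_simp
    ring

lemma integral_closed_form {X : ℝ} (hX : 0 < X) :
    ∫ t in (0:ℝ)..1, X / 2 * Real.sqrt (1 - t) / (1 + X * (1 - t))
      = 1 - Real.arctan (Real.sqrt X) / Real.sqrt X := by
  have hsX : 0 < Real.sqrt X := Real.sqrt_pos.mpr hX
  set G : ℝ → ℝ := fun t => -Real.sqrt (1 - t) + (1 / Real.sqrt X) * Real.arctan (Real.sqrt X * Real.sqrt (1 - t)) with hG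
  have hcont : ContinuousOn G (Set.Icc 0 1) := by
    apply Continuous.continuousOn
    have h1 : Continuous fun t : ℝ => Real.sqrt (1 - t) :=
      Real.continuous_sqrt.comp (by continuity)
    continuity
  have hderiv : ∀ t ∈ Set.Ioo (0:ℝ) 1,
      HasDerivWithinAt G (X / 2 * Real.sqrt (1 - t) / (1 + X * (1 - t))) (Set.Ioi t) t := by
    intro t ht
    apply HasDerivAt.hasDerivWithinAt
    have h0 : (0:ℝ) < 1 - t := by linarith [ht.2]
    have hsp : 0 < Real.sqrt (1 - t) := Real.sqrt_pos.mpr h0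
    have hs : HasDerivAt (fun s : ℝ => 1 - s) (-1) t := by
      simpa using ((hasDerivAt_id t).const_sub 1)
    have hsq : HasDerivAt (fun s : ℝ => Real.sqrt (1 - s)) (1 / (2 * Real.sqrt (1 - t)) * (-1)) t :=
      (Real.hasDerivAt_sqrt (ne_of_gt h0)).comp t hs
    have hat : HasDerivAt (fun s : ℝ => Real.arctan (Real.sqrt X * Real.sqrt (1 - s)))
        (1 / (1 + (Real.sqrt X * Real.sqrt (1 - t)) ^ 2) * (Real.sqrt X * (1 / (2 * Real.sqrt (1 - t)) * (-1)))) t := by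
      exact (Real.hasDerivAt_arctan _).comp t (hsq.const_mul _)
    have := (hsq.neg).add (hat.const_mul (1 / Real.sqrt X))
    refine this.congr_deriv (Eq.symm ?_)
    have hsq1 : Real.sqrt (1 - t) ^ 2 = 1 - t := Real.sq_sqrt h0.le
    have hsqX : Real.sqrt X ^ 2 = X := Real.sq_sqrt hX.le
    have hden : 1 + (Real.sqrt X * Real.sqrt (1 - t)) ^ 2 = 1 + X * (1 - t) := by
      rw [mul_pow, hsq1, hsqX]
    rw [hden]
    have hden0 : (0:ℝ) < 1 + X * (1 - t) := by nlinarith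
    field_simp
    linear_combination X * hsq1
  have hint : IntervalIntegrable (fun t : ℝ => X / 2 * Real.sqrt (1 - t) / (1 + X * (1 - t)))
      MeasureTheory.volume 0 1 := by
    apply ContinuousOn.intervalIntegrable
    rw [Set.uIcc_of_le (by norm_num)]
    apply ContinuousOn.div
    · exact Continuous.continuousOn (by
        exact continuous_const.mul (Real.continuous_sqrt.comp (by continuity)))
    · exact Continuous.continuousOn (by continuity)
    · intro t ht
      have : 0 ≤ X * (1 - t) := by
        have := ht.2; have := ht.1
        apply mul_nonneg hX.le; simp at *; linarith
      positivity
  have := intervalIntegral.integral_eq_sub_of_hasDeriv_right_of_le (by norm_num) hcont hderiv hint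
  rw [this, hG]
  norm_num
  rw [div_eq_mul_inv]
  ring

lemma tsum_J_eq {X : ℝ} (hX : 0 < X) :
    ∑' k : ℕ, (X / (1 + X)) ^ (k + 1) / 2 * J k
      = ∫ t in (0:ℝ)..1, X / 2 * Real.sqrt (1 - t) / (1 + X * (1 - t)) := by
  set ζ := X / (1 + X) with hζ
  have h1X : (0:ℝ) < 1 + X := by linarith
  have hz0 : 0 ≤ ζ := by positivity
  have hz1 : ζ < 1 := by rw [hζ, div_lt_one h1X]; linarith
  set F : ℕ → ℝ → ℝ := fun k t => ζ ^ (k + 1) / 2 * (t ^ k * Real.sqrt (1 - t)) with hF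
  have hFcont : ∀ k, Continuous (F k) := fun k => continuous_const.mul (J_cont k)
  have hFint : ∀ k, Integrable (F k) (volume.restrict (Set.Ioc (0:ℝ) 1)) := by
    intro k
    rw [← IntegrableOn]
    exact ((hFcont k).continuousOn.integrableOn_compact isCompact_Icc).mono_set Set.Ioc_subset_Icc_self
  have hFbound : ∀ k, ∀ t ∈ Set.Ioc (0:ℝ) 1, ‖F k t‖ ≤ ζ ^ (k + 1) / 2 := by
    intro k t ht
    have ht0 : 0 < t := ht.1
    have ht1 : t ≤ 1 := ht.2
    have h1 : t ^ k ≤ 1 := pow_le_one₀ ht0.le ht1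
    have h2 : Real.sqrt (1 - t) ≤ 1 := Real.sqrt_le_one.mpr (by linarith)
    have h3 : 0 ≤ Real.sqrt (1 - t) := Real.sqrt_nonneg _
    rw [Real.norm_eq_abs, abs_mul, abs_of_nonneg (by positivity : (0:ℝ) ≤ ζ ^ (k+1) / 2),
      abs_mul, abs_of_nonneg (by positivity : (0:ℝ) ≤ t ^ k), abs_of_nonneg h3]
    have h4 : t ^ k * Real.sqrt (1 - t) ≤ 1 := by nlinarith [pow_nonneg ht0.le k]
    nlinarith [pow_nonneg hz0 (k+1)]
  have hFnormint : ∀ k, ∫ t in Set.Ioc (0:ℝ) 1, ‖F k t‖ ≤ ζ ^ (k + 1) / 2 := by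
    intro k
    calc ∫ t in Set.Ioc (0:ℝ) 1, ‖F k t‖
        ≤ ∫ _ in Set.Ioc (0:ℝ) 1, ζ ^ (k + 1) / 2 := by
          apply setIntegral_mono_on (hFint k).norm (integrable_const _) measurableSet_Ioc
          exact hFbound k
      _ = ζ ^ (k + 1) / 2 := by simp
  have hsum : Summable fun k : ℕ => ∫ t in Set.Ioc (0:ℝ) 1, ‖F k t‖ := by
    apply Summable.of_nonneg_of_le (fun k => integral_nonneg fun t => norm_nonneg _) hFnormint
    apply Summable.div_const
    exact ((summable_geometric_of_lt_one hz0 hz1).mul_left ζ).congr (fun k => (pow_succ' ζ k).symm)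
  have hswap := MeasureTheory.integral_tsum_of_summable_integral_norm hFint hsum
  have hJ : ∀ k, ∫ t in Set.Ioc (0:ℝ) 1, F k t = ζ ^ (k + 1) / 2 * J k := by
    intro k
    rw [← intervalIntegral.integral_of_le (by norm_num : (0:ℝ) ≤ 1)]
    rw [hF]
    exact intervalIntegral.integral_const_mul _ _
  calc ∑' k : ℕ, ζ ^ (k + 1) / 2 * J k = ∑' k, ∫ t in Set.Ioc (0:ℝ) 1, F k t := by
        exact tsum_congr fun k => (hJ k).symm
    _ = ∫ t in Set.Ioc (0:ℝ) 1, ∑' k, F k t := hswap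
    _ = ∫ t in Set.Ioc (0:ℝ) 1, X / 2 * Real.sqrt (1 - t) / (1 + X * (1 - t)) := by
        apply setIntegral_congr_fun measurableSet_Ioc
        intro t ht
        show (∑' k, F k t) = X / 2 * Real.sqrt (1 - t) / (1 + X * (1 - t))
        have ht0 : 0 < t := ht.1
        have ht1 : t ≤ 1 := ht.2
        have hzt0 : 0 ≤ ζ * t := by positivity
        have hzt1 : ζ * t < 1 := by nlinarith
        have hgeo := tsum_geometric_of_lt_one hzt0 hzt1
        have step : ∀ k : ℕ, F k t = ζ * Real.sqrt (1 - t) / 2 * (ζ * t) ^ k := by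
          intro k
          rw [hF]
          simp only [pow_succ', mul_pow]
          ring
        rw [tsum_congr step, tsum_mul_left, hgeo]
        have hden : (0:ℝ) < 1 - ζ * t := by linarith
        have hden2 : (0:ℝ) < 1 + X * (1 - t) := by nlinarith
        have e1 : (1 + X) ≠ 0 := h1X.ne'
        have e2 : (1 + X * (1 - t)) ≠ 0 := hden2.ne'
        have h5 : (1 - ζ * t)⁻¹ = (1 + X) / (1 + X * (1 - t)) := by
          rw [show 1 - ζ * t = (1 + X * (1 - t)) / (1 + X) by rw [hζ]; field_simp; ring, inv_div]
        rw [h5, hζ]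
        field_simp
    _ = _ := (intervalIntegral.integral_of_le (by norm_num : (0:ℝ) ≤ 1)).symm

theorem stmt_19 (X : ℝ) (hX : 0 < X) :
    (∀ ε : ℝ, 0 < ε → ε < 2 →
      Summable (fun m : ℕ =>
        poch (ε / 2) m * poch (1 - ε / 2) m /
          (poch (3 / 2) m * (Nat.factorial m : ℝ)) * (X / (1 + X)) ^ m)) ∧
    Filter.Tendsto
      (fun ε : ℝ =>
        Real.Gamma (1 + ε) * (16 * Real.pi) ^ (ε - 1) / (2 * Real.pi * ε) *
            (1 + X) ^ (-ε / 2) * Phi X ε -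
          1 / (32 * Real.pi ^ 2 * ε))
      (nhdsWithin 0 (Set.Ioi 0))
      (nhds (1 / (32 * Real.pi ^ 2) *
        (1 - Real.eulerMascheroniConstant -
          Real.log (Real.sqrt (1 + X) / (16 * Real.pi)) -
          Real.arctan (Real.sqrt X) / Real.sqrt X))) := by
  have h1X : (0:ℝ) < 1 + X := by linarith
  constructor
  · exact fun ε hε hε2 => summable_phi hX hε hε2
  · set g : ℝ → ℝ := fun ε => Real.Gamma (1 + ε) * (16 * Real.pi) ^ ε * (1 + X) ^ (-ε / 2)
      with hgdef
    set d : ℝ := -Real.eulerMascheroniConstant + Real.log (16 * Real.pi)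
      - Real.log (1 + X) / 2 with hddef
    have hgd : HasDerivAt g d 0 := hasDerivAt_gfun X hX
    have hg0 : g 0 = 1 := by
      rw [hgdef]; simp [Real.Gamma_one]
    have hQ0 : (∑' k, qterm X 0 k) = 1 - Real.arctan (Real.sqrt X) / Real.sqrt X := by
      have h1 : ∀ k : ℕ, qterm X 0 k = (X / (1 + X)) ^ (k + 1) / 2 * J k := by
        intro k
        rw [qterm, J_eq]
        norm_num
        rw [poch_one, poch_one]
        have h3 : (0:ℝ) < poch (3/2 : ℝ) (k+1) := poch_pos (by norm_num) (k+1)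
        have hf : (0:ℝ) < ((k+1).factorial : ℝ) := by positivity
        field_simp
      rw [tsum_congr h1, tsum_J_eq hX, integral_closed_form hX]
    have T1 : Filter.Tendsto (fun ε : ℝ => (g ε - 1) / ε) (nhdsWithin 0 (Set.Ioi 0)) (nhds d) := by
      have h := hasDerivAt_iff_tendsto_slope.mp hgd
      have h2 := h.mono_left (nhdsWithin_mono 0
        (fun x (hx : x ∈ Set.Ioi (0:ℝ)) => Set.mem_compl_singleton_iff.mpr hx.ne'))
      apply h2.congr
      intro ε
      rw [slope_def_field, hg0, sub_zero]
    have T2 : Filter.Tendsto g (nhdsWithin 0 (Set.Ioi 0)) (nhds 1) := by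
      rw [← hg0]
      exact (hgd.continuousAt.tendsto).mono_left nhdsWithin_le_nhds
    have T3 := Qfun_tendsto hX
    have TA := (T1.mul_const (1 / (32 * Real.pi ^ 2))).add
      ((T2.mul T3).mul_const (1 / (32 * Real.pi ^ 2)))
    apply Filter.Tendsto.congr'
      (f₁ := fun ε => (g ε - 1) / ε * (1 / (32 * Real.pi ^ 2))
        + g ε * (∑' k, qterm X ε k) * (1 / (32 * Real.pi ^ 2)))
    · have hmem : Set.Ioo (0:ℝ) 1 ∈ nhdsWithin (0:ℝ) (Set.Ioi 0) :=
        Ioo_mem_nhdsGT_of_mem (Set.mem_Ico.mpr ⟨le_refl 0, one_pos⟩)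
      filter_upwards [hmem] with ε hε
      have hε0 : 0 < ε := hε.1
      have hε2 : ε < 2 := by linarith [hε.2]
      rw [Phi_eq hX hε0 hε2, Real.rpow_sub (by positivity : (0:ℝ) < 16 * Real.pi),
        Real.rpow_one, hgdef]
      have hπ : Real.pi ≠ 0 := Real.pi_ne_zero
      field_simp
      ring
    · convert TA using 2
      rw [hQ0, hddef]
      have hlog : Real.log (Real.sqrt (1 + X) / (16 * Real.pi))
          = Real.log (1 + X) / 2 - Real.log (16 * Real.pi) := by
        rw [Real.log_div (Real.sqrt_ne_zero'.mpr (by linarith)) (by positivity),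
          Real.log_sqrt (by linarith)]
      rw [hlog]
      ring
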